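/- For α ≥ 1, β ≥ 0, γ ≥ e², the function f(x) = x^α · ln(x^β + γ) belongs to S; in particular it is submultiplicative: (ab)^α ln((ab)^β + γ) ≤ a^α ln(a^β + γ) · b^α ln(b^β + γ) for all a, b ≥ 0. -/

import Mathlib

open Real Set

lemma log_ge_two {γ : ℝ} (hγ : Real.exp 2 ≤ γ) {u : ℝ} (hu : 0 ≤ u) :
    2 ≤ Real.log (u + γ) := by
  have h1 : Real.exp 2 ≤ u + γ := by linarith
  calc (2:ℝ) = Real.log (Real.exp 2) := (Real.log_exp 2).symm
    _ ≤ Real.log (u + γ) := Real.log_le_log (Real.exp_pos 2) h1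

lemma convex_part (α β γ : ℝ) (hα : 1 ≤ α) (hβ : 0 ≤ β) (hγ : Real.exp 2 ≤ γ) :
    ConvexOn ℝ (Set.Ici 0) (fun x => x ^ α * Real.log (x ^ β + γ)) := by
  have hγ0 : (0:ℝ) < γ := lt_of_lt_of_le (Real.exp_pos 2) hγ
  have hDpos : ∀ x : ℝ, 0 ≤ x → 0 < x ^ β + γ := fun x hx => by
    have := Real.rpow_nonneg hx β; linarith
  refine convexOn_of_hasDerivWithinAt2_nonneg (f' := fun x =>
      α * x ^ (α-1) * Real.log (x^β+γ) + x^α * ((x^β+γ)⁻¹ * (β * x^(β-1))))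
    (f'' := fun x =>
      α * ((α-1) * x^(α-1-1)) * Real.log (x^β+γ)
        + α * x^(α-1) * ((x^β+γ)⁻¹ * (β * x^(β-1)))
        + (α * x^(α-1) * ((x^β+γ)⁻¹ * (β * x^(β-1)))
          + x^α * (-(β * x^(β-1)) / (x^β+γ)^2 * (β * x^(β-1))
            + (x^β+γ)⁻¹ * (β * ((β-1) * x^(β-1-1))))))
    (convex_Ici 0) ?_ ?_ ?_ ?_
  · -- continuity
    intro x hx
    have hD : x ^ β + γ ≠ 0 := (hDpos x hx).ne'
    exact ((Real.continuousAt_rpow_const x α (Or.inr (by linarith))).mul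
      (((Real.continuousAt_rpow_const x β (Or.inr hβ)).add continuousAt_const).log hD)).continuousWithinAt
  · -- first derivative
    intro x hx
    rw [interior_Ici] at hx
    have hx0 : x ≠ 0 := ne_of_gt hx
    have hD : x ^ β + γ ≠ 0 := (hDpos x hx.le).ne'
    have hu : HasDerivAt (fun y : ℝ => y^β + γ) (β * x^(β-1)) x :=
      (Real.hasDerivAt_rpow_const (Or.inl hx0)).add_const γ
    have hlog : HasDerivAt (fun y : ℝ => Real.log (y^β+γ)) ((x^β+γ)⁻¹ * (β * x^(β-1))) x :=
      by have h := (Real.hasDerivAt_log hD).comp x hu; exact h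
    have hpow : HasDerivAt (fun y : ℝ => y^α) (α * x^(α-1)) x :=
      Real.hasDerivAt_rpow_const (Or.inl hx0)
    exact (hpow.mul hlog).hasDerivWithinAt
  · -- second derivative
    intro x hx
    rw [interior_Ici] at hx
    have hx0 : x ≠ 0 := ne_of_gt hx
    have hD : x ^ β + γ ≠ 0 := (hDpos x hx.le).ne'
    have hu : HasDerivAt (fun y : ℝ => y^β + γ) (β * x^(β-1)) x :=
      (Real.hasDerivAt_rpow_const (Or.inl hx0)).add_const γ
    have hlog : HasDerivAt (fun y : ℝ => Real.log (y^β+γ)) ((x^β+γ)⁻¹ * (β * x^(β-1))) x :=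
      by have h := (Real.hasDerivAt_log hD).comp x hu; exact h
    have hpow : HasDerivAt (fun y : ℝ => y^α) (α * x^(α-1)) x :=
      Real.hasDerivAt_rpow_const (Or.inl hx0)
    have hpow1 : HasDerivAt (fun y : ℝ => y^(α-1)) ((α-1) * x^(α-1-1)) x :=
      Real.hasDerivAt_rpow_const (Or.inl hx0)
    have hpowb : HasDerivAt (fun y : ℝ => β * y^(β-1)) (β * ((β-1) * x^(β-1-1))) x :=
      (Real.hasDerivAt_rpow_const (Or.inl hx0)).const_mul β
    have hinv : HasDerivAt (fun y : ℝ => (y^β+γ)⁻¹) (-(β * x^(β-1)) / (x^β+γ)^2) x := hu.inv hD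
    have hA : HasDerivAt (fun y : ℝ => α * y^(α-1) * Real.log (y^β+γ))
        (α * ((α-1) * x^(α-1-1)) * Real.log (x^β+γ)
          + α * x^(α-1) * ((x^β+γ)⁻¹ * (β * x^(β-1)))) x :=
      (hpow1.const_mul α).mul hlog
    have hB : HasDerivAt (fun y : ℝ => y^α * ((y^β+γ)⁻¹ * (β * y^(β-1))))
        (α * x^(α-1) * ((x^β+γ)⁻¹ * (β * x^(β-1)))
          + x^α * (-(β * x^(β-1)) / (x^β+γ)^2 * (β * x^(β-1))
            + (x^β+γ)⁻¹ * (β * ((β-1) * x^(β-1-1))))) x :=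
      hpow.mul (hinv.mul hpowb)
    exact (hA.add hB).hasDerivWithinAt
  · -- nonnegativity of second derivative
    intro x hx
    rw [interior_Ici] at hx
    have hx0 : (0:ℝ) < x := hx
    have hU : (0:ℝ) < x ^ β := Real.rpow_pos_of_pos hx0 β
    have hDp : (0:ℝ) < x ^ β + γ := by linarith
    have ha1 : x^(α-1) = x^α / x := by
      rw [Real.rpow_sub hx0, Real.rpow_one]
    have ha2 : x^(α-1-1) = x^α / x / x := by
      rw [Real.rpow_sub hx0, Real.rpow_sub hx0, Real.rpow_one]
    have hb1 : x^(β-1) = x^β / x := by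
      rw [Real.rpow_sub hx0, Real.rpow_one]
    have hb2 : x^(β-1-1) = x^β / x / x := by
      rw [Real.rpow_sub hx0, Real.rpow_sub hx0, Real.rpow_one]
    have hL : (2:ℝ) ≤ Real.log (x^β+γ) := log_ge_two hγ hU.le
    set A := x ^ α with hA
    set U := x ^ β with hUdef
    set D := x ^ β + γ with hDdef
    set L := Real.log (x^β+γ) with hLdef
    have hApos : 0 < A := Real.rpow_pos_of_pos hx0 α
    have key : α * ((α-1) * x^(α-1-1)) * L
        + α * x^(α-1) * (D⁻¹ * (β * x^(β-1)))
        + (α * x^(α-1) * (D⁻¹ * (β * x^(β-1)))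
          + A * (-(β * x^(β-1)) / D^2 * (β * x^(β-1))
            + D⁻¹ * (β * ((β-1) * x^(β-1-1)))))
        = A / x^2 * (α*(α-1)*L + β*U/D*(2*α+β-1-β*U/D)) := by
      rw [ha1, ha2, hb1, hb2]
      field_simp
      ring
    rw [key]
    have ht0 : 0 ≤ β*U/D := by positivity
    have ht1 : β*U/D ≤ β := by
      rw [div_le_iff₀ hDp]
      nlinarith
    have h1 : 0 ≤ α*(α-1)*L := mul_nonneg (mul_nonneg (by linarith) (by linarith)) (by linarith)
    have h2 : 0 ≤ β*U/D*(2*α+β-1-β*U/D) := mul_nonneg ht0 (by linarith)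
    have h3 : 0 ≤ A / x^2 := div_nonneg hApos.le (by positivity)
    exact mul_nonneg h3 (by linarith)


lemma submul_log {γ : ℝ} (hγ : Real.exp 2 ≤ γ) {u v : ℝ} (hu : 0 ≤ u) (hv : 0 ≤ v) :
    Real.log (u * v + γ) ≤ Real.log (u + γ) * Real.log (v + γ) := by
  have hγ1 : (1:ℝ) ≤ γ := by nlinarith [Real.add_one_le_exp (2:ℝ)]
  have hγ0 : (0:ℝ) < γ := by linarith
  have h1 : u * v + γ ≤ (u + γ) * (v + γ) := by nlinarith [mul_nonneg hu hv]
  have hs : 2 ≤ Real.log (u + γ) := log_ge_two hγ hu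
  have ht : 2 ≤ Real.log (v + γ) := log_ge_two hγ hv
  have h2 : Real.log (u * v + γ) ≤ Real.log ((u + γ) * (v + γ)) :=
    Real.log_le_log (by nlinarith [mul_nonneg hu hv]) h1
  rw [Real.log_mul (by positivity) (by positivity)] at h2
  nlinarith

/-- Membership in the class `S`: `f : [0,∞) → [0,∞)` is submultiplicative,
convex, vanishes at `0`, and is not identically zero. -/
def MemS (f : ℝ → ℝ) : Prop :=
  (∀ x, 0 ≤ x → 0 ≤ f x) ∧
  (∀ a b, 0 ≤ a → 0 ≤ b → f (a * b) ≤ f a * f b) ∧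
  ConvexOn ℝ (Set.Ici 0) f ∧
  f 0 = 0 ∧
  (∃ x, 0 ≤ x ∧ f x ≠ 0)

/-- For `alpha >= 1`, `beta >= 0`, `gamma >= e^2`, the function `x ^ alpha * log (x ^ beta + gamma)` belongs to `S`; in particular it is submultiplicative. -/
theorem stmt_12 (α β γ : ℝ) (hα : 1 ≤ α) (hβ : 0 ≤ β) (hγ : Real.exp 2 ≤ γ) :
    MemS (fun x => x ^ α * Real.log (x ^ β + γ)) ∧
      ∀ a b : ℝ, 0 ≤ a → 0 ≤ b →
        (a * b) ^ α * Real.log ((a * b) ^ β + γ) ≤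
          (a ^ α * Real.log (a ^ β + γ)) * (b ^ α * Real.log (b ^ β + γ)) := by
  have hγ0 : (0:ℝ) < γ := lt_of_lt_of_le (Real.exp_pos 2) hγ
  have hnn : ∀ x : ℝ, 0 ≤ x → 0 ≤ x ^ α * Real.log (x ^ β + γ) := by
    intro x hx
    have h2 : 2 ≤ Real.log (x ^ β + γ) := log_ge_two hγ (Real.rpow_nonneg hx β)
    exact mul_nonneg (Real.rpow_nonneg hx α) (by linarith)
  have hsub : ∀ a b : ℝ, 0 ≤ a → 0 ≤ b →
      (a * b) ^ α * Real.log ((a * b) ^ β + γ) ≤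
        (a ^ α * Real.log (a ^ β + γ)) * (b ^ α * Real.log (b ^ β + γ)) := by
    intro a b ha hb
    rw [Real.mul_rpow ha hb, Real.mul_rpow ha hb]
    have hlog : Real.log (a ^ β * b ^ β + γ) ≤
        Real.log (a ^ β + γ) * Real.log (b ^ β + γ) :=
      submul_log hγ (Real.rpow_nonneg ha β) (Real.rpow_nonneg hb β)
    have hab : 0 ≤ a ^ α * b ^ α :=
      mul_nonneg (Real.rpow_nonneg ha α) (Real.rpow_nonneg hb α)
    calc a ^ α * b ^ α * Real.log (a ^ β * b ^ β + γ)
        ≤ a ^ α * b ^ α * (Real.log (a ^ β + γ) * Real.log (b ^ β + γ)) :=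
          mul_le_mul_of_nonneg_left hlog hab
      _ = a ^ α * Real.log (a ^ β + γ) * (b ^ α * Real.log (b ^ β + γ)) := by ring
  refine ⟨⟨hnn, fun a b ha hb => by simpa using hsub a b ha hb,
    convex_part α β γ hα hβ hγ, ?_, ⟨1, zero_le_one, ?_⟩⟩, hsub⟩
  · simp [Real.zero_rpow (by linarith : α ≠ 0)]
  · have h2 : 2 ≤ Real.log ((1:ℝ) ^ β + γ) := by
      rw [Real.one_rpow]; exact log_ge_two hγ zero_le_one
    simp only [Real.one_rpow, one_mul]
    intro h
    rw [Real.one_rpow] at h2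
    linarith [h ▸ h2]
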